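/- Let X be a separable F-space and T a continuous linear operator on X. If there exists x ∈ X such that for every non-empty open set U ⊆ X the set N(x,U) = {n ∈ ℕ : Tⁿx ∈ U} has positive upper Banach density (i.e., T is reiteratively hypercyclic), then T is topologically ergodic: for all non-empty open sets U, V ⊆ X, the set N(U,V) = {n ∈ ℕ : Tⁿ(U) ∩ V ≠ ∅} is syndetic. -/

import Mathlib

open Filter
open scoped Classical

noncomputable def upperCount (A : Set ℕ) (s : ℕ) : ℝ :=
  limsup (fun k : ℕ => ((A ∩ Set.Icc (k + 1) (k + s)).ncard : ℝ)) atTop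

noncomputable def upperBanachDensity (A : Set ℕ) : ℝ :=
  limsup (fun s : ℕ => upperCount A s / s) atTop

/-- A set `S ⊆ ℕ` is syndetic: it has bounded gaps. -/
def SyndeticN (S : Set ℕ) : Prop :=
  ∃ M : ℕ, 0 < M ∧ ∀ n : ℕ, ∃ s ∈ S, n ≤ s ∧ s < n + M

lemma count_eq (A : Set ℕ) (k s : ℕ) :
    (A ∩ Set.Icc (k + 1) (k + s)).ncard
      = ((Finset.Icc (k+1) (k+s)).filter (· ∈ A)).card := by
  classical
  rw [← Set.ncard_coe_finset]
  congr 1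
  ext a
  simp only [Set.mem_inter_iff, Set.mem_Icc, Finset.coe_filter, Finset.mem_Icc,
    Set.mem_setOf_eq]
  tauto

lemma count_le (A : Set ℕ) (k s : ℕ) :
    (A ∩ Set.Icc (k + 1) (k + s)).ncard ≤ s := by
  classical
  rw [count_eq]
  calc ((Finset.Icc (k+1) (k+s)).filter (· ∈ A)).card ≤ (Finset.Icc (k+1) (k+s)).card :=
        Finset.card_filter_le _ _
    _ = s := by rw [Nat.card_Icc]; omega

lemma count_cast_le (A : Set ℕ) (s : ℕ) :
    ∀ k : ℕ, ((A ∩ Set.Icc (k + 1) (k + s)).ncard : ℝ) ≤ (s : ℝ) :=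
  fun k => by exact_mod_cast count_le A k s

lemma upperCount_le (A : Set ℕ) (s : ℕ) : upperCount A s ≤ s :=
  limsup_le_of_le (isCoboundedUnder_le_of_le atTop (fun k => by positivity))
    (Eventually.of_forall (count_cast_le A s))

lemma upperCount_nonneg (A : Set ℕ) (s : ℕ) : 0 ≤ upperCount A s :=
  le_limsup_of_frequently_le
    (Frequently.of_forall (fun k => by positivity))
    (isBoundedUnder_of ⟨(s : ℝ), count_cast_le A s⟩)

lemma upperBanachDensity_unbounded {A : Set ℕ} (h : 0 < upperBanachDensity A) (m : ℕ) :
    ∃ b ∈ A, m ≤ b := by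
  by_contra hc
  push_neg at hc
  have hcount : ∀ s, upperCount A s = 0 := by
    intro s
    have : ∀ᶠ k in (atTop : Filter ℕ), ((A ∩ Set.Icc (k + 1) (k + s)).ncard : ℝ) = (0:ℝ) := by
      filter_upwards [eventually_ge_atTop m] with k hk
      have : A ∩ Set.Icc (k + 1) (k + s) = ∅ := by
        ext a
        simp only [Set.mem_inter_iff, Set.mem_Icc, Set.mem_empty_iff_false, iff_false]
        rintro ⟨ha, h1, _⟩
        exact absurd (hc a ha) (by omega)
      simp [this]
    rw [upperCount, limsup_congr this, limsup_const]
  have : upperBanachDensity A = 0 := by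
    have : (fun s : ℕ => upperCount A s / s) = fun _ => (0:ℝ) := by
      funext s; rw [hcount]; simp
    rw [upperBanachDensity, this, limsup_const]
  linarith

def diffSet (A : Set ℕ) : Set ℕ := {d | ∃ p ∈ A, ∃ q ∈ A, q ≤ p ∧ d = p - q}

lemma diffSet_syndetic {A : Set ℕ} (h : 0 < upperBanachDensity A) :
    SyndeticN (diffSet A) := by
  by_contra hs
  simp only [SyndeticN, not_exists, not_and, not_forall] at hs
  have hgap : ∀ m : ℕ, ∃ g : ℕ, ∀ d ∈ diffSet A, g ≤ d → ¬ d < g + (m + 2) :=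
    fun m => hs (m + 2) (by omega)
  set gap : ℕ → ℕ := fun m => (hgap m).choose with hgapdef
  have hgapspec : ∀ m, ∀ d ∈ diffSet A, gap m ≤ d → ¬ d < gap m + (m + 2) :=
    fun m => (hgap m).choose_spec
  -- build the translates
  set e : ℕ → ℕ := fun i => Nat.rec 0 (fun _ prev => gap prev + prev + 1) i with hedef
  have he0 : e 0 = 0 := rfl
  have hesucc : ∀ i, e (i + 1) = gap (e i) + e i + 1 := fun i => rfl
  have hemono : StrictMono e := by
    apply strictMono_nat_of_lt_succ
    intro i
    rw [hesucc]
    omega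
  have hdiff : ∀ i j : ℕ, j < i → e i - e j ∉ diffSet A := by
    intro i j hj hD
    cases i with
    | zero => omega
    | succ i =>
      have hji : e j ≤ e i := hemono.monotone (by omega)
      rw [hesucc] at hD
      exact hgapspec (e i) _ hD (by omega) (by omega)
  -- the number of translates
  set δ := upperBanachDensity A with hδ
  set K : ℕ := ⌈δ⁻¹⌉₊ + 1 with hK
  have hKpos : 0 < K := by omega
  have hKδ : 1 / (K : ℝ) < δ := by
    rw [div_lt_iff₀ (by positivity), ← div_lt_iff₀' h, one_div]
    calc δ⁻¹ ≤ (⌈δ⁻¹⌉₊ : ℝ) := Nat.le_ceil _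
      _ < K := by rw [hK]; exact_mod_cast Nat.lt_succ_self _
  set N := e K with hN
  -- key counting bound
  have hcount : ∀ k s : ℕ, K * (A ∩ Set.Icc (k + 1) (k + s)).ncard ≤ s + N := by
    intro k s
    set C : Finset ℕ := (Finset.Icc (k+1) (k+s)).filter (· ∈ A) with hC
    have hCA : ∀ a ∈ C, a ∈ A ∧ k + 1 ≤ a ∧ a ≤ k + s := by
      intro a ha
      simp only [hC, Finset.mem_filter, Finset.mem_Icc] at ha
      tauto
    have hsub : (Finset.range K).biUnion (fun i => C.image (· + e i))
        ⊆ Finset.Icc (k+1) (k+s+N) := by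
      intro b hb
      simp only [Finset.mem_biUnion, Finset.mem_image, Finset.mem_range] at hb
      obtain ⟨i, hi, a, ha, rfl⟩ := hb
      obtain ⟨-, h1, h2⟩ := hCA a ha
      have : e i ≤ N := hemono.monotone (by omega : i ≤ K)
      simp only [Finset.mem_Icc]
      omega
    have hdisj : ∀ i ∈ Finset.range K, ∀ j ∈ Finset.range K, i ≠ j →
        Disjoint (C.image (· + e i)) (C.image (· + e j)) := by
      have key : ∀ i j : ℕ, i < j → ∀ a ∈ C, ∀ a' ∈ C, a + e i ≠ a' + e j := by
        intro i j hij a ha a' ha' heq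
        have hea : e i < e j := hemono hij
        have haa : a' ≤ a := by omega
        exact hdiff j i hij ⟨a, (hCA a ha).1, a', (hCA a' ha').1, haa, by omega⟩
      intro i _ j _ hij
      rw [Finset.disjoint_left]
      intro b hb hb'
      simp only [Finset.mem_image] at hb hb'
      obtain ⟨a, ha, rfl⟩ := hb
      obtain ⟨a', ha', heq⟩ := hb'
      rcases Nat.lt_or_ge i j with hlt | hge
      · exact key i j hlt a ha a' ha' heq.symm
      · exact key j i (by omega) a' ha' a ha heq
    have hcard : K * C.card ≤ s + N := by
      calc K * C.card = ∑ i ∈ Finset.range K, (C.image (· + e i)).card := by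
            rw [Finset.sum_congr rfl (fun i _ => Finset.card_image_of_injective C
              (add_left_injective (e i)))]
            rw [Finset.sum_const, Finset.card_range, smul_eq_mul]
        _ = ((Finset.range K).biUnion (fun i => C.image (· + e i))).card :=
            (Finset.card_biUnion hdisj).symm
        _ ≤ (Finset.Icc (k+1) (k+s+N)).card := Finset.card_le_card hsub
        _ = s + N := by rw [Nat.card_Icc]; omega
    rw [count_eq]
    exact hcard
  -- translate to real bounds on upperCount
  have hUC : ∀ s : ℕ, upperCount A s ≤ ((s : ℝ) + N) / K := by
    intro s
    apply limsup_le_of_le (isCoboundedUnder_le_of_le atTop (fun k => by positivity))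
    apply Eventually.of_forall
    intro k
    rw [le_div_iff₀ (by positivity)]
    have := hcount k s
    calc ((A ∩ Set.Icc (k + 1) (k + s)).ncard : ℝ) * K
        = ((K * (A ∩ Set.Icc (k + 1) (k + s)).ncard : ℕ) : ℝ) := by push_cast; ring
      _ ≤ ((s + N : ℕ) : ℝ) := by exact_mod_cast this
      _ = (s : ℝ) + N := by push_cast; ring
  -- the comparison sequence
  set g : ℕ → ℝ := fun s => 1 / K + ((N : ℝ) / K) * (1 / s) with hg
  have hgt : Tendsto g atTop (nhds (1 / (K : ℝ))) := by
    have h0 : Tendsto (fun s : ℕ => ((N : ℝ) / K) * (1 / s)) atTop (nhds 0) := by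
      have := tendsto_one_div_atTop_nhds_zero_nat.const_mul ((N : ℝ) / K)
      simpa [mul_comm] using this
    have h1 := (tendsto_const_nhds (x := 1 / (K : ℝ)) (f := (atTop : Filter ℕ))).add h0
    simpa [hg, one_div] using h1
  have hfg : ∀ᶠ s : ℕ in atTop, upperCount A s / s ≤ g s := by
    filter_upwards [eventually_ge_atTop 1] with s hs1
    have hs0 : (0 : ℝ) < s := by exact_mod_cast hs1
    have : upperCount A s / s ≤ (((s : ℝ) + N) / K) / s := by
      gcongr
      exact hUC s
    refine this.trans (le_of_eq ?_)
    have hK0 : (K : ℝ) ≠ 0 := by positivity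
    have hs0' : (s : ℝ) ≠ 0 := ne_of_gt hs0
    simp only [hg]
    field_simp
  have hle : δ ≤ 1 / (K : ℝ) := by
    have h1 : upperBanachDensity A ≤ limsup g atTop := by
      refine limsup_le_limsup hfg ?_ ?_
      · exact isCoboundedUnder_le_of_eventually_le atTop (f := fun s => upperCount A s / s)
          (x := 0)
          (Eventually.of_forall (fun s => div_nonneg (upperCount_nonneg A s) (by positivity)))
      · exact hgt.isBoundedUnder_le
    rwa [hgt.limsup_eq] at h1
  linarith


/-- A reiteratively hypercyclic operator on a separable F-space is topologically
ergodic: all sets `N(U,V)` are syndetic. -/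
theorem reiteratively_hypercyclic_implies_topologically_ergodic
    {X : Type*} [AddCommGroup X] [Module ℝ X] [UniformSpace X] [IsUniformAddGroup X]
    [ContinuousSMul ℝ X] [CompleteSpace X] [TopologicalSpace.MetrizableSpace X]
    [TopologicalSpace.SeparableSpace X]
    (T : X →L[ℝ] X)
    (h : ∃ x : X, ∀ U : Set X, IsOpen U → U.Nonempty →
        0 < upperBanachDensity {n : ℕ | (T ^ n) x ∈ U}) :
    ∀ U V : Set X, IsOpen U → IsOpen V → U.Nonempty → V.Nonempty →
      SyndeticN {n : ℕ | ((T ^ n) '' U ∩ V).Nonempty} := by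
  obtain ⟨x, hx⟩ := h
  intro U V hU hV hUne hVne
  have hpow : ∀ (i j : ℕ) (y : X), (T ^ i) ((T ^ j) y) = (T ^ (i + j)) y := by
    intro i j y
    rw [pow_add, ContinuousLinearMap.mul_apply]
  -- find a with T^a x ∈ U and b ≥ a with T^b x ∈ V
  obtain ⟨a, haU, -⟩ := upperBanachDensity_unbounded (hx U hU hUne) 0
  obtain ⟨b, hbV, hab⟩ := upperBanachDensity_unbounded (hx V hV hVne) a
  simp only [Set.mem_setOf_eq] at haU hbV
  set n := b - a with hn
  set W := U ∩ (fun y => (T ^ n) y) ⁻¹' V with hWdef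
  have hWopen : IsOpen W := hU.inter (hV.preimage (T ^ n).continuous)
  have hWne : W.Nonempty := by
    refine ⟨(T ^ a) x, haU, ?_⟩
    show (T ^ n) ((T ^ a) x) ∈ V
    rw [hpow]
    have : n + a = b := by omega
    rwa [this]
  set A := {m : ℕ | (T ^ m) x ∈ W} with hAdef
  have hA : 0 < upperBanachDensity A := hx W hWopen hWne
  obtain ⟨M, hMpos, hsyn⟩ := diffSet_syndetic hA
  refine ⟨M + n, by omega, fun m => ?_⟩
  obtain ⟨d, hdD, hmd, hdlt⟩ := hsyn m
  obtain ⟨p, hp, q, hq, hqp, rfl⟩ := hdD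
  refine ⟨p - q + n, ?_, by omega, by omega⟩
  have hqW : (T ^ q) x ∈ W := hq
  have hpW : (T ^ p) x ∈ W := hp
  refine ⟨(T ^ (p - q + n)) ((T ^ q) x), ⟨(T ^ q) x, hqW.1, rfl⟩, ?_⟩
  rw [hpow]
  have heq : p - q + n + q = n + p := by omega
  rw [heq, ← hpow]
  exact hpW.2
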